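/- Let v : ZMod n → ℂ³ \ {0} be a nondegenerate n-gon (n ≥ 3) and suppose there are k ∈ ZMod n and a linear equivalence f : ℂ³ ≃ (ℂ³)* with f (v j)(v (j+k)) = 0 and f (v j)(v (j+k+1)) = 0 for all j. Then for every integer s ≥ 1 there exists a linear equivalence f_s : ℂ³ ≃ (ℂ³)* with f_s (v j)(v (j+k')) = 0 and f_s (v j)(v (j+k'+1)) = 0 for all j, where k' := k + s·(2k+1) in ZMod n. (In the paper's terms: every m-self-dual n-gon is also m'-self-dual for every m' ≡ e·m with e odd.) -/

import Mathlib

/-- A self-dual polygon with shift `k` is also self-dual with shift `k' = k + s(2k+1)`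
for every `s ≥ 1` (every `m`-self-dual `n`-gon is `m'`-self-dual for `m' ≡ em`, `e` odd). -/
theorem stmt_11 (n : ℕ) (hn : 3 ≤ n)
    (v : ZMod n → Fin 3 → ℂ) (hv0 : ∀ j, v j ≠ 0)
    (hnd : ∀ j : ZMod n, LinearIndependent ℂ ![v (j - 1), v j, v (j + 1)])
    (k : ZMod n)
    (f : (Fin 3 → ℂ) ≃ₗ[ℂ] Module.Dual ℂ (Fin 3 → ℂ))
    (hf : ∀ j : ZMod n, f (v j) (v (j + k)) = 0 ∧ f (v j) (v (j + k + 1)) = 0) :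
    ∀ s : ℕ, 1 ≤ s →
      ∃ fs : (Fin 3 → ℂ) ≃ₗ[ℂ] Module.Dual ℂ (Fin 3 → ℂ),
        ∀ j : ZMod n,
          fs (v j) (v (j + (k + (s : ZMod n) * (2 * k + 1)))) = 0 ∧
          fs (v j) (v (j + (k + (s : ZMod n) * (2 * k + 1)) + 1)) = 0 := by
  have hcard : (Fintype.card (Fin 3)) = Module.finrank ℂ (Fin 3 → ℂ) := by simp
  -- bases from nondegeneracy
  let b : ZMod n → Module.Basis (Fin 3) ℂ (Fin 3 → ℂ) := fun m =>
    basisOfLinearIndependentOfCardEqFinrank (hnd m) hcard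
  have hb : ∀ m : ZMod n, ⇑(b m) = ![v (m - 1), v m, v (m + 1)] := fun m =>
    coe_basisOfLinearIndependentOfCardEqFinrank _ _
  -- f is injective in the sense: x ≠ 0 → f x ≠ 0, and x ≠ 0 → flip x ≠ 0
  have hfl : ∀ x : Fin 3 → ℂ, x ≠ 0 → (f.toLinearMap : _ →ₗ[ℂ] Module.Dual ℂ (Fin 3 → ℂ)).flip x ≠ 0 := by
    intro x hx h
    apply hx
    rw [← Module.forall_dual_apply_eq_zero_iff ℂ x]
    intro φ
    have := LinearMap.congr_fun h (f.symm φ)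
    simpa using this
  have hfne : ∀ x : Fin 3 → ℂ, x ≠ 0 → f.toLinearMap x ≠ 0 := by
    intro x hx h
    exact hx (f.map_eq_zero_iff.mp h)
  -- key proportionality: flip (v j) = c • f (v (j - (2k+1)))
  have key : ∀ j : ZMod n, ∃ c : ℂ, c ≠ 0 ∧
      (f.toLinearMap.flip (v j) : Module.Dual ℂ (Fin 3 → ℂ)) =
        c • f.toLinearMap (v (j - (2 * k + 1))) := by
    intro j
    set m : ZMod n := j - k with hm
    set φ : Module.Dual ℂ (Fin 3 → ℂ) := f.toLinearMap.flip (v j) with hφ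
    set ψ : Module.Dual ℂ (Fin 3 → ℂ) := f.toLinearMap (v (j - (2 * k + 1))) with hψ
    have hφ0 : φ (v (m - 1)) = 0 := by
      have h := (hf (j - k - 1)).2
      have e : j - k - 1 + k + 1 = j := by ring
      rw [e] at h
      simpa [hφ] using h
    have hφ1 : φ (v m) = 0 := by
      have h := (hf (j - k)).1
      have e : j - k + k = j := by ring
      rw [e] at h
      simpa [hφ] using h
    have hψ0 : ψ (v (m - 1)) = 0 := by
      have h := (hf (j - (2 * k + 1))).1
      have e : j - (2 * k + 1) + k = m - 1 := by rw [hm]; ring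
      rw [e] at h
      simpa [hψ] using h
    have hψ1 : ψ (v m) = 0 := by
      have h := (hf (j - (2 * k + 1))).2
      have e : j - (2 * k + 1) + k + 1 = m := by rw [hm]; ring
      rw [e] at h
      simpa [hψ] using h
    have hφne : φ ≠ 0 := hfl _ (hv0 j)
    have hψne : ψ ≠ 0 := hfne _ (hv0 _)
    have hφ2 : φ (v (m + 1)) ≠ 0 := by
      intro h
      apply hφne
      refine Module.Basis.ext (b m) ?_
      intro i
      rw [hb m]
      fin_cases i <;> simp [hφ0, hφ1, h]
    have hψ2 : ψ (v (m + 1)) ≠ 0 := by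
      intro h
      apply hψne
      refine Module.Basis.ext (b m) ?_
      intro i
      rw [hb m]
      fin_cases i <;> simp [hψ0, hψ1, h]
    refine ⟨φ (v (m + 1)) / ψ (v (m + 1)), div_ne_zero hφ2 hψ2, ?_⟩
    refine Module.Basis.ext (b m) ?_
    intro i
    rw [hb m]
    fin_cases i
    · simp [hφ0, hψ0]
    · simp [hφ1, hψ1]
    · have h3 : (φ (v (m + 1)) / ψ (v (m + 1))) * ψ (v (m + 1)) = φ (v (m + 1)) :=
        div_mul_cancel₀ _ hψ2
      simpa using h3.symm
  -- the endomorphism T with T (v j) = c • v (j - (2k+1))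
  let T : (Fin 3 → ℂ) →ₗ[ℂ] (Fin 3 → ℂ) := f.symm.toLinearMap ∘ₗ f.toLinearMap.flip
  have hT : ∀ j : ZMod n, ∃ c : ℂ, c ≠ 0 ∧ T (v j) = c • v (j - (2 * k + 1)) := by
    intro j
    obtain ⟨c, hc, hcv⟩ := key j
    refine ⟨c, hc, ?_⟩
    simp only [T, LinearMap.comp_apply, hcv]
    simp
  have hTinj : Function.Injective T := by
    intro x y hxy
    have h : f.toLinearMap.flip x = f.toLinearMap.flip y := by
      have := congrArg f (show f.symm (f.toLinearMap.flip x) = f.symm (f.toLinearMap.flip y) from hxy)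
      simpa using this
    by_contra hne
    have := hfl (x - y) (sub_ne_zero_of_ne hne)
    apply this
    rw [map_sub, h, sub_self]
  let E : (Fin 3 → ℂ) ≃ₗ[ℂ] (Fin 3 → ℂ) := LinearEquiv.ofInjectiveEndo T hTinj
  have hE : ∀ j : ZMod n, ∃ c : ℂ, c ≠ 0 ∧ E (v j) = c • v (j - (2 * k + 1)) := hT
  have hEs : ∀ j : ZMod n, ∃ c : ℂ, c ≠ 0 ∧ E.symm (v j) = c • v (j + (2 * k + 1)) := by
    intro j
    obtain ⟨c, hc, hcv⟩ := hE (j + (2 * k + 1))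
    have e : j + (2 * k + 1) - (2 * k + 1) = j := by ring
    rw [e] at hcv
    refine ⟨c⁻¹, inv_ne_zero hc, ?_⟩
    have := congrArg E.symm hcv
    simp only [LinearEquiv.symm_apply_apply, map_smul] at this
    rw [this, smul_smul, inv_mul_cancel₀ hc, one_smul]
  -- induction: for every s there is fs proportional to the shifted f
  have main : ∀ s : ℕ, ∃ fs : (Fin 3 → ℂ) ≃ₗ[ℂ] Module.Dual ℂ (Fin 3 → ℂ),
      ∀ j : ZMod n, ∃ c : ℂ, c ≠ 0 ∧
        fs (v j) = c • f (v (j + (s : ZMod n) * (2 * k + 1))) := by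
    intro s
    induction s with
    | zero => exact ⟨f, fun j => ⟨1, one_ne_zero, by simp⟩⟩
    | succ t ih =>
      obtain ⟨fs, hfs⟩ := ih
      refine ⟨E.symm.trans fs, ?_⟩
      intro j
      obtain ⟨c, hc, hcv⟩ := hEs j
      obtain ⟨c', hc', hcv'⟩ := hfs (j + (2 * k + 1))
      refine ⟨c * c', mul_ne_zero hc hc', ?_⟩
      have e : j + (2 * k + 1) + (t : ZMod n) * (2 * k + 1) =
          j + ((t : ℕ) + 1 : ℕ) * (2 * k + 1) := by push_cast; ring
      rw [e] at hcv'
      simp only [LinearEquiv.trans_apply, hcv, map_smul, hcv', smul_smul]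
  intro s _
  obtain ⟨fs, hfs⟩ := main s
  refine ⟨fs, fun j => ?_⟩
  obtain ⟨c, hc, hcv⟩ := hfs j
  have e1 : j + (k + (s : ZMod n) * (2 * k + 1)) =
      (j + (s : ZMod n) * (2 * k + 1)) + k := by ring
  have e2 : j + (k + (s : ZMod n) * (2 * k + 1)) + 1 =
      (j + (s : ZMod n) * (2 * k + 1)) + k + 1 := by ring
  rw [e1, hcv]
  constructor
  · simp [(hf (j + (s : ZMod n) * (2 * k + 1))).1]
  · simp [(hf (j + (s : ZMod n) * (2 * k + 1))).2]
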